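/- arXiv:2303.11439 — 3 statements merged into one kernel-verified Lean document; each statement's English description precedes it below -/
import Mathlib

section
/- The Grushin (Baouendi–Grushin) operator applied to the gauge function satisfies 𝓛ρ = Δₓρ + |x|^{2α} ∂²_y ρ = (n+α)|Xρ|²/ρ at every point with x ≠ 0, where |Xρ|² = |x|^{2α}ρ^{-2α}. -/
open Real

/-- The Grushin gauge function. -/
noncomputable def rho (n : ℕ) (α : ℝ) (x : EuclideanSpace ℝ (Fin n)) (y : ℝ) : ℝ :=
  (‖x‖ ^ (2 * (α + 1)) + (α + 1) ^ 2 * y ^ 2) ^ (1 / (2 * (α + 1)))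

/-- The Euclidean Laplacian in x: sum of second directional derivatives along
coordinate directions. -/
noncomputable def lapx (n : ℕ) (f : EuclideanSpace ℝ (Fin n) → ℝ)
    (x : EuclideanSpace ℝ (Fin n)) : ℝ :=
  ∑ i : Fin n, iteratedDeriv 2 (fun t : ℝ => f (x + t • EuclideanSpace.single i 1)) 0

/-- Second derivative in `y` of the one-dimensional profile. -/
lemma ypart (α A : ℝ) (hα : 0 < α) (hA : 0 < A) (y : ℝ) :
    deriv (fun y' : ℝ =>
        deriv (fun y'' : ℝ => (A + (α + 1) ^ 2 * y'' ^ 2) ^ (1 / (2 * (α + 1)))) y') y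
      = (α + 1) * (A + (α + 1) ^ 2 * y ^ 2) ^ (1 / (2 * (α + 1)) - 1)
        + (α + 1) ^ 2 * (1 - 2 * (α + 1)) * y ^ 2
          * (A + (α + 1) ^ 2 * y ^ 2) ^ (1 / (2 * (α + 1)) - 2) := by
  have hα1 : (0:ℝ) < α + 1 := by linarith
  have hpos : ∀ z : ℝ, 0 < A + (α + 1) ^ 2 * z ^ 2 := fun z => by positivity
  have hin : ∀ z : ℝ, HasDerivAt (fun w : ℝ => A + (α + 1) ^ 2 * w ^ 2)
      (2 * (α + 1) ^ 2 * z) z := by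
    intro z
    have h := ((hasDerivAt_pow 2 z).const_mul ((α + 1) ^ 2)).const_add A
    refine h.congr_deriv ?_
    simp
    ring
  have hd1 : ∀ z : ℝ, HasDerivAt (fun y'' : ℝ => (A + (α + 1) ^ 2 * y'' ^ 2) ^ (1 / (2 * (α + 1))))
      (2 * (α + 1) ^ 2 * z * (1 / (2 * (α + 1)))
        * (A + (α + 1) ^ 2 * z ^ 2) ^ (1 / (2 * (α + 1)) - 1)) z :=
    fun z => (hin z).rpow_const (Or.inl (hpos z).ne')
  have hde : (fun y' : ℝ =>
        deriv (fun y'' : ℝ => (A + (α + 1) ^ 2 * y'' ^ 2) ^ (1 / (2 * (α + 1)))) y')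
      = fun z : ℝ => 2 * (α + 1) ^ 2 * z * (1 / (2 * (α + 1)))
          * (A + (α + 1) ^ 2 * z ^ 2) ^ (1 / (2 * (α + 1)) - 1) :=
    funext fun z => (hd1 z).deriv
  rw [hde]
  have hlin : HasDerivAt (fun z : ℝ => 2 * (α + 1) ^ 2 * z) (2 * (α + 1) ^ 2) y := by
    simpa using (hasDerivAt_id y).const_mul (2 * (α + 1) ^ 2)
  have hrp : HasDerivAt (fun z : ℝ => (A + (α + 1) ^ 2 * z ^ 2) ^ (1 / (2 * (α + 1)) - 1))
      (2 * (α + 1) ^ 2 * y * (1 / (2 * (α + 1)) - 1)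
        * (A + (α + 1) ^ 2 * y ^ 2) ^ (1 / (2 * (α + 1)) - 1 - 1)) y :=
    (hin y).rpow_const (Or.inl (hpos y).ne')
  have h2 : HasDerivAt (fun z : ℝ => 2 * (α + 1) ^ 2 * z * (1 / (2 * (α + 1)))
      * (A + (α + 1) ^ 2 * z ^ 2) ^ (1 / (2 * (α + 1)) - 1))
      (2 * (α + 1) ^ 2 * (1 / (2 * (α + 1)))
          * (A + (α + 1) ^ 2 * y ^ 2) ^ (1 / (2 * (α + 1)) - 1)
        + 2 * (α + 1) ^ 2 * y * (1 / (2 * (α + 1)))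
          * (2 * (α + 1) ^ 2 * y * (1 / (2 * (α + 1)) - 1)
            * (A + (α + 1) ^ 2 * y ^ 2) ^ (1 / (2 * (α + 1)) - 1 - 1))) y :=
    (hlin.mul_const (1 / (2 * (α + 1)))).mul hrp
  rw [h2.deriv]
  rw [show 1 / (2 * (α + 1)) - 1 - 1 = 1 / (2 * (α + 1)) - 2 by ring]
  set T1 := (A + (α + 1) ^ 2 * y ^ 2) ^ (1 / (2 * (α + 1)) - 1) with hT1
  set T2 := (A + (α + 1) ^ 2 * y ^ 2) ^ (1 / (2 * (α + 1)) - 2) with hT2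
  field_simp

/-- Second derivative along a coordinate direction in `x`. -/
lemma xpart (α C q0 b : ℝ) (hα : 0 < α) (hq0 : 0 < q0) (hC : 0 ≤ C) :
    deriv (deriv (fun t : ℝ =>
        ((q0 + 2 * b * t + t ^ 2) ^ (α + 1) + C) ^ (1 / (2 * (α + 1))))) 0
      = (1 - 2 * (α + 1)) * b ^ 2 * q0 ^ α * q0 ^ α
          * (q0 ^ (α + 1) + C) ^ (1 / (2 * (α + 1)) - 2)
        + (q0 ^ (α + 1) + C) ^ (1 / (2 * (α + 1)) - 1)
          * (2 * α * q0 ^ (α - 1) * b ^ 2 + q0 ^ α) := by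
  have hα1 : (0:ℝ) < α + 1 := by linarith
  have h1le : (1:ℝ) ≤ α + 1 := by linarith
  have hq : ∀ t : ℝ, HasDerivAt (fun t : ℝ => q0 + 2 * b * t + t ^ 2) (2 * b + 2 * t) t := by
    intro t
    have h := (((hasDerivAt_id t).const_mul (2 * b)).const_add q0).add (hasDerivAt_pow 2 t)
    refine h.congr_deriv ?_
    simp
  have hev : ∀ᶠ t in nhds (0:ℝ), 0 < q0 + 2 * b * t + t ^ 2 := by
    have hc : Continuous fun t : ℝ => q0 + 2 * b * t + t ^ 2 := by continuity
    have h0 : (0:ℝ) < q0 + 2 * b * 0 + 0 ^ 2 := by simpa using hq0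
    exact hc.continuousAt.eventually (eventually_gt_nhds h0)
  have hgd : ∀ t : ℝ, 0 < q0 + 2 * b * t + t ^ 2 →
      HasDerivAt (fun t : ℝ => ((q0 + 2 * b * t + t ^ 2) ^ (α + 1) + C) ^ (1 / (2 * (α + 1))))
        ((2 * b + 2 * t) * (α + 1) * (q0 + 2 * b * t + t ^ 2) ^ (α + 1 - 1)
          * (1 / (2 * (α + 1)))
          * ((q0 + 2 * b * t + t ^ 2) ^ (α + 1) + C) ^ (1 / (2 * (α + 1)) - 1)) t := by
    intro t ht
    have hP : HasDerivAt (fun t : ℝ => (q0 + 2 * b * t + t ^ 2) ^ (α + 1) + C)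
        ((2 * b + 2 * t) * (α + 1) * (q0 + 2 * b * t + t ^ 2) ^ (α + 1 - 1)) t :=
      ((hq t).rpow_const (Or.inr h1le)).add_const C
    have hPpos : (0:ℝ) < (q0 + 2 * b * t + t ^ 2) ^ (α + 1) + C :=
      add_pos_of_pos_of_nonneg (Real.rpow_pos_of_pos ht _) hC
    exact hP.rpow_const (Or.inl hPpos.ne')
  have heq : deriv (fun t : ℝ =>
        ((q0 + 2 * b * t + t ^ 2) ^ (α + 1) + C) ^ (1 / (2 * (α + 1))))
      =ᶠ[nhds (0:ℝ)] fun t : ℝ =>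
        (2 * b + 2 * t) * (α + 1) * (q0 + 2 * b * t + t ^ 2) ^ (α + 1 - 1)
          * (1 / (2 * (α + 1)))
          * ((q0 + 2 * b * t + t ^ 2) ^ (α + 1) + C) ^ (1 / (2 * (α + 1)) - 1) := by
    filter_upwards [hev] with t ht
    exact (hgd t ht).deriv
  rw [heq.deriv_eq]
  have hne : (q0 + 2 * b * 0 + 0 ^ 2 : ℝ) ≠ 0 := by simpa using hq0.ne'
  have hA : HasDerivAt (fun t : ℝ => 2 * b + 2 * t) 2 0 := by
    simpa using ((hasDerivAt_id (0:ℝ)).const_mul 2).const_add (2 * b)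
  have hB : HasDerivAt (fun t : ℝ => (q0 + 2 * b * t + t ^ 2) ^ (α + 1 - 1))
      ((2 * b + 2 * 0) * (α + 1 - 1) * (q0 + 2 * b * 0 + 0 ^ 2) ^ (α + 1 - 1 - 1)) 0 :=
    (hq 0).rpow_const (Or.inl hne)
  have hf1 : HasDerivAt (fun t : ℝ =>
      (2 * b + 2 * t) * (α + 1) * (q0 + 2 * b * t + t ^ 2) ^ (α + 1 - 1))
      (2 * (α + 1) * (q0 + 2 * b * 0 + 0 ^ 2) ^ (α + 1 - 1)
        + (2 * b + 2 * 0) * (α + 1)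
          * ((2 * b + 2 * 0) * (α + 1 - 1) * (q0 + 2 * b * 0 + 0 ^ 2) ^ (α + 1 - 1 - 1))) 0 :=
    (hA.mul_const (α + 1)).mul hB
  have hq0pos : (0:ℝ) < q0 + 2 * b * 0 + 0 ^ 2 := by simpa using hq0
  have hP0 : HasDerivAt (fun t : ℝ => (q0 + 2 * b * t + t ^ 2) ^ (α + 1) + C)
      ((2 * b + 2 * 0) * (α + 1) * (q0 + 2 * b * 0 + 0 ^ 2) ^ (α + 1 - 1)) 0 :=
    ((hq 0).rpow_const (Or.inr h1le)).add_const C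
  have hP0pos : (0:ℝ) < (q0 + 2 * b * 0 + 0 ^ 2) ^ (α + 1) + C :=
    add_pos_of_pos_of_nonneg (Real.rpow_pos_of_pos hq0pos _) hC
  have hC3 : HasDerivAt (fun t : ℝ =>
      ((q0 + 2 * b * t + t ^ 2) ^ (α + 1) + C) ^ (1 / (2 * (α + 1)) - 1))
      ((2 * b + 2 * 0) * (α + 1) * (q0 + 2 * b * 0 + 0 ^ 2) ^ (α + 1 - 1)
        * (1 / (2 * (α + 1)) - 1)
        * ((q0 + 2 * b * 0 + 0 ^ 2) ^ (α + 1) + C) ^ (1 / (2 * (α + 1)) - 1 - 1)) 0 :=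
    hP0.rpow_const (Or.inl hP0pos.ne')
  have hphi : HasDerivAt (fun t : ℝ =>
      (2 * b + 2 * t) * (α + 1) * (q0 + 2 * b * t + t ^ 2) ^ (α + 1 - 1)
        * (1 / (2 * (α + 1)))
        * ((q0 + 2 * b * t + t ^ 2) ^ (α + 1) + C) ^ (1 / (2 * (α + 1)) - 1))
      ((2 * (α + 1) * (q0 + 2 * b * 0 + 0 ^ 2) ^ (α + 1 - 1)
          + (2 * b + 2 * 0) * (α + 1)
            * ((2 * b + 2 * 0) * (α + 1 - 1) * (q0 + 2 * b * 0 + 0 ^ 2) ^ (α + 1 - 1 - 1)))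
          * (1 / (2 * (α + 1)))
          * ((q0 + 2 * b * 0 + 0 ^ 2) ^ (α + 1) + C) ^ (1 / (2 * (α + 1)) - 1)
        + (2 * b + 2 * 0) * (α + 1) * (q0 + 2 * b * 0 + 0 ^ 2) ^ (α + 1 - 1)
            * (1 / (2 * (α + 1)))
            * ((2 * b + 2 * 0) * (α + 1) * (q0 + 2 * b * 0 + 0 ^ 2) ^ (α + 1 - 1)
              * (1 / (2 * (α + 1)) - 1)
              * ((q0 + 2 * b * 0 + 0 ^ 2) ^ (α + 1) + C) ^ (1 / (2 * (α + 1)) - 1 - 1))) 0 :=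
    (hf1.mul_const (1 / (2 * (α + 1)))).mul hC3
  rw [hphi.deriv]
  rw [show α + 1 - 1 = α by ring, show 1 / (2 * (α + 1)) - 1 - 1 = 1 / (2 * (α + 1)) - 2 by ring]
  norm_num
  set T1 := (q0 ^ (α + 1) + C) ^ (1 / (2 * (α + 1)) - 1) with hT1
  set T2 := (q0 ^ (α + 1) + C) ^ (1 / (2 * (α + 1)) - 2) with hT2
  field_simp
  ring

theorem stmt_2 (n : ℕ) (α : ℝ) (hα : 0 < α)
    (x : EuclideanSpace ℝ (Fin n)) (y : ℝ) (hx : x ≠ 0) :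
    lapx n (fun x' => rho n α x' y) x
        + ‖x‖ ^ (2 * α) * deriv (fun y' => deriv (fun y'' => rho n α x y'') y') y
      = (n + α) * (‖x‖ ^ (2 * α) * (rho n α x y) ^ (-(2 * α))) / rho n α x y := by
  have hα1 : (0:ℝ) < α + 1 := by linarith
  have hr : (0:ℝ) < ‖x‖ := by rwa [norm_pos_iff]
  have hu : (0:ℝ) < ‖x‖ ^ (2 * (α + 1)) + (α + 1) ^ 2 * y ^ 2 :=
    add_pos_of_pos_of_nonneg (Real.rpow_pos_of_pos hr _) (by positivity)
  have hp2 : ∀ v : EuclideanSpace ℝ (Fin n),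
      ‖v‖ ^ (2 * (α + 1)) = ((‖v‖ ^ 2 : ℝ)) ^ (α + 1) := by
    intro v
    rw [← Real.rpow_natCast ‖v‖ 2, ← Real.rpow_mul (norm_nonneg v)]
    norm_num
  have hsq : ∀ (i : Fin n) (t : ℝ),
      ‖x + t • EuclideanSpace.single i (1:ℝ)‖ ^ 2 = ‖x‖ ^ 2 + 2 * x i * t + t ^ 2 := by
    intro i t
    rw [norm_add_sq_real, real_inner_smul_right, norm_smul]
    have h1 : (inner ℝ x (EuclideanSpace.single i (1:ℝ)) : ℝ) = x i := by
      rw [EuclideanSpace.inner_single_right]; simp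
    rw [h1]
    simp [Real.norm_eq_abs, mul_pow, sq_abs, EuclideanSpace.norm_single]
    ring
  have hfun : ∀ i : Fin n, (fun t : ℝ => rho n α (x + t • EuclideanSpace.single i 1) y)
      = fun t : ℝ => ((‖x‖ ^ 2 + 2 * x i * t + t ^ 2) ^ (α + 1) + (α + 1) ^ 2 * y ^ 2)
          ^ (1 / (2 * (α + 1))) := by
    intro i
    funext t
    simp only [rho]
    rw [hp2, hsq i t]
  have hit2 : ∀ g : ℝ → ℝ, iteratedDeriv 2 g = deriv (deriv g) := by
    intro g
    rw [show (2:ℕ) = 1 + 1 from rfl, iteratedDeriv_succ, iteratedDeriv_one]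
  have hx2 : ∑ i, (x i) ^ 2 = ‖x‖ ^ 2 := by
    rw [EuclideanSpace.norm_eq, Real.sq_sqrt (by positivity)]
    simp [Real.norm_eq_abs, sq_abs]
  have hterm : ∀ i : Fin n,
      iteratedDeriv 2 (fun t : ℝ => rho n α (x + t • EuclideanSpace.single i 1) y) 0
      = ((1 - 2 * (α + 1)) * (‖x‖ ^ 2 : ℝ) ^ α * (‖x‖ ^ 2 : ℝ) ^ α
            * (‖x‖ ^ (2 * (α + 1)) + (α + 1) ^ 2 * y ^ 2) ^ (1 / (2 * (α + 1)) - 2)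
          + (‖x‖ ^ (2 * (α + 1)) + (α + 1) ^ 2 * y ^ 2) ^ (1 / (2 * (α + 1)) - 1)
            * (2 * α) * (‖x‖ ^ 2 : ℝ) ^ (α - 1)) * (x i) ^ 2
        + (‖x‖ ^ (2 * (α + 1)) + (α + 1) ^ 2 * y ^ 2) ^ (1 / (2 * (α + 1)) - 1)
            * (‖x‖ ^ 2 : ℝ) ^ α := by
    intro i
    rw [hit2, hfun i]
    rw [xpart α ((α + 1) ^ 2 * y ^ 2) (‖x‖ ^ 2) (x i) hα (pow_pos hr 2) (by positivity)]
    rw [← hp2 x]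
    ring
  have hlap : lapx n (fun x' => rho n α x' y) x
      = ((1 - 2 * (α + 1)) * (‖x‖ ^ 2 : ℝ) ^ α * (‖x‖ ^ 2 : ℝ) ^ α
            * (‖x‖ ^ (2 * (α + 1)) + (α + 1) ^ 2 * y ^ 2) ^ (1 / (2 * (α + 1)) - 2)
          + (‖x‖ ^ (2 * (α + 1)) + (α + 1) ^ 2 * y ^ 2) ^ (1 / (2 * (α + 1)) - 1)
            * (2 * α) * (‖x‖ ^ 2 : ℝ) ^ (α - 1)) * ‖x‖ ^ 2
        + (n : ℝ) * ((‖x‖ ^ (2 * (α + 1)) + (α + 1) ^ 2 * y ^ 2) ^ (1 / (2 * (α + 1)) - 1)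
            * (‖x‖ ^ 2 : ℝ) ^ α) := by
    simp only [lapx]
    rw [Finset.sum_congr rfl (fun i _ => hterm i), Finset.sum_add_distrib, ← Finset.mul_sum,
      hx2, Finset.sum_const, Finset.card_univ, Fintype.card_fin, nsmul_eq_mul]
  have hyy : deriv (fun y' => deriv (fun y'' => rho n α x y'') y') y
      = (α + 1) * (‖x‖ ^ (2 * (α + 1)) + (α + 1) ^ 2 * y ^ 2) ^ (1 / (2 * (α + 1)) - 1)
        + (α + 1) ^ 2 * (1 - 2 * (α + 1)) * y ^ 2
          * (‖x‖ ^ (2 * (α + 1)) + (α + 1) ^ 2 * y ^ 2) ^ (1 / (2 * (α + 1)) - 2) := by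
    have h := ypart α (‖x‖ ^ (2 * (α + 1))) hα (Real.rpow_pos_of_pos hr _) y
    simpa only [rho] using h
  have hρ : rho n α x y
      = (‖x‖ ^ (2 * (α + 1)) + (α + 1) ^ 2 * y ^ 2) ^ (1 / (2 * (α + 1))) := rfl
  have hrhs : (↑n + α) * (‖x‖ ^ (2 * α) * rho n α x y ^ (-(2 * α))) / rho n α x y
      = (↑n + α) * ‖x‖ ^ (2 * α)
        * ((‖x‖ ^ (2 * (α + 1)) + (α + 1) ^ 2 * y ^ 2)
          * (‖x‖ ^ (2 * (α + 1)) + (α + 1) ^ 2 * y ^ 2) ^ (1 / (2 * (α + 1)) - 2)) := by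
    have hu2 : ((‖x‖ ^ (2 * (α + 1)) + (α + 1) ^ 2 * y ^ 2) ^ (1 / (2 * (α + 1)))) ^ (-(2 * α))
        = (‖x‖ ^ (2 * (α + 1)) + (α + 1) ^ 2 * y ^ 2) ^ (1 / (2 * (α + 1)) * -(2 * α)) :=
      (Real.rpow_mul hu.le _ _).symm
    rw [hρ, hu2, mul_div_assoc, mul_div_assoc, ← Real.rpow_sub hu]
    rw [show 1 / (2 * (α + 1)) * -(2 * α) - 1 / (2 * (α + 1)) = 1 / (2 * (α + 1)) - 2 + 1 by
      field_simp; ring]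
    rw [Real.rpow_add hu, Real.rpow_one]
    ring
  rw [hlap, hyy, hrhs]
  have E2 : (‖x‖ ^ 2 : ℝ) ^ α = ‖x‖ ^ (2 * α) := by
    rw [← Real.rpow_natCast ‖x‖ 2, ← Real.rpow_mul (norm_nonneg x)]
    norm_num
  have E3 : (‖x‖ ^ 2 : ℝ) ^ (α - 1) * (‖x‖ ^ 2 : ℝ) = (‖x‖ ^ 2 : ℝ) ^ α := by
    have h := (Real.rpow_add (pow_pos hr 2) (α - 1) 1).symm
    rw [Real.rpow_one] at h
    rw [h, show α - 1 + 1 = α by ring]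
  have E4 : ‖x‖ ^ (2 * α) * (‖x‖ ^ 2 : ℝ) = ‖x‖ ^ (2 * (α + 1)) := by
    rw [← Real.rpow_natCast ‖x‖ 2, ← Real.rpow_add hr]
    congr 1
    push_cast
    ring
  have E5 : (‖x‖ ^ (2 * (α + 1)) + (α + 1) ^ 2 * y ^ 2)
      * (‖x‖ ^ (2 * (α + 1)) + (α + 1) ^ 2 * y ^ 2) ^ (1 / (2 * (α + 1)) - 2)
      = (‖x‖ ^ (2 * (α + 1)) + (α + 1) ^ 2 * y ^ 2) ^ (1 / (2 * (α + 1)) - 1) := by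
    have h := (Real.rpow_add hu 1 (1 / (2 * (α + 1)) - 2)).symm
    rw [Real.rpow_one] at h
    rw [h, show (1:ℝ) + (1 / (2 * (α + 1)) - 2) = 1 / (2 * (α + 1)) - 1 by ring]
  set p : ℝ := (‖x‖ ^ 2 : ℝ) with hp
  set s : ℝ := ‖x‖ ^ (2 * α) with hs
  set A : ℝ := ‖x‖ ^ (2 * (α + 1)) with hA
  set pa : ℝ := p ^ α with hpa
  set pa1 : ℝ := p ^ (α - 1) with hpa1
  set U1 : ℝ := (A + (α + 1) ^ 2 * y ^ 2) ^ (1 / (2 * (α + 1)) - 1) with hU1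
  set U2 : ℝ := (A + (α + 1) ^ 2 * y ^ 2) ^ (1 / (2 * (α + 1)) - 2) with hU2
  linear_combination
    ((1 - 2 * (α + 1)) * U2 * p * pa + (1 - 2 * (α + 1)) * U2 * p * s
      + 2 * α * U1 + (n : ℝ) * U1) * E2
    + (2 * α * U1) * E3
    + ((1 - 2 * (α + 1)) * U2 * s) * E4
    - (((n : ℝ) + 3 * α + 1) * s) * E5
end

section
/- For α > 0 and n + α > 1, the function Γ(ξ) = ρ(ξ)^{1-n-α} satisfies 𝓛Γ = 0 at every point ξ = (x,y) with x ≠ 0, where 𝓛 is the Grushin operator and ρ the gauge function. -/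
open Real

/-- The fundamental solution Γ = ρ^{1-n-α}. -/
noncomputable def Gam (n : ℕ) (α : ℝ) (x : EuclideanSpace ℝ (Fin n)) (y : ℝ) : ℝ :=
  (rho n α x y) ^ (1 - (n : ℝ) - α)

noncomputable def EE (n : ℕ) (α : ℝ) : ℝ := (1 - (n:ℝ) - α)/(2*(α+1))

lemma my_hq (a b : ℝ) (t : ℝ) : HasDerivAt (fun s : ℝ => a + b*s + s^2) (b + 2*t) t := by
  have h := (((hasDerivAt_id t).const_mul b).const_add a).add (hasDerivAt_pow 2 t)
  simp only [id_eq, mul_one, Nat.cast_ofNat, pow_one] at h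
  exact h.congr_deriv (by ring)

lemma aux_x (c β d a b : ℝ) (ha : 0 < a) (hd : 0 ≤ d) :
    iteratedDeriv 2 (fun t : ℝ => ((a + b*t + t^2)^c + d)^β) 0
      = β*(β-1)*(a^c+d)^(β-2)*(c*a^(c-1)*b)^2
        + β*(a^c+d)^(β-1)*(c*(c-1)*a^(c-2)*b^2 + 2*c*a^(c-1)) := by
  have h00 : (0:ℝ) < a + b*0 + 0^2 := by simpa using ha
  have hopen : ∀ᶠ t in nhds (0:ℝ), 0 < a + b*t + t^2 := by
    have hcont : Continuous fun t : ℝ => a + b*t + t^2 := by continuity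
    have : {t : ℝ | 0 < a + b*t + t^2} ∈ nhds (0:ℝ) :=
      (isOpen_lt continuous_const hcont).mem_nhds h00
    exact this
  have hderiv : ∀ t : ℝ, 0 < a + b*t + t^2 →
      HasDerivAt (fun s : ℝ => ((a+b*s+s^2)^c + d)^β)
        (((b+2*t) * c * (a+b*t+t^2)^(c-1)) * β * ((a+b*t+t^2)^c + d)^(β-1)) t := by
    intro t ht
    have h1 := (my_hq a b t).rpow_const (p := c) (Or.inl ht.ne')
    have h2 := h1.add_const d
    have hu : 0 < (a+b*t+t^2)^c + d :=
      add_pos_of_pos_of_nonneg (Real.rpow_pos_of_pos ht c) hd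
    exact h2.rpow_const (Or.inl hu.ne')
  have hev : deriv (fun s : ℝ => ((a+b*s+s^2)^c + d)^β)
      =ᶠ[nhds (0:ℝ)] fun t => ((b+2*t) * c * (a+b*t+t^2)^(c-1)) * β * ((a+b*t+t^2)^c + d)^(β-1) := by
    filter_upwards [hopen] with t ht
    exact (hderiv t ht).deriv
  rw [iteratedDeriv_succ, iteratedDeriv_one, hev.deriv_eq]
  have hu0 : 0 < a^c + d := add_pos_of_pos_of_nonneg (Real.rpow_pos_of_pos ha c) hd
  have hG1 : HasDerivAt (fun t : ℝ => (b+2*t) * c) (2*c) 0 := by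
    have h := (((hasDerivAt_id (0:ℝ)).const_mul 2).const_add b).mul_const c
    simp only [id_eq, mul_one] at h
    exact h.congr_deriv (by ring)
  have hG2 := (my_hq a b 0).rpow_const (p := c - 1) (Or.inl h00.ne')
  have hG4 := ((my_hq a b 0).rpow_const (p := c) (Or.inl h00.ne') |>.add_const d).rpow_const
      (p := β - 1) (Or.inl (by simpa using hu0.ne' : (a+b*0+0^2)^c + d ≠ 0))
  have hF := ((hG1.mul hG2).mul_const β).mul hG4
  rw [show deriv (fun t => (b+2*t) * c * (a+b*t+t^2)^(c-1) * β * ((a+b*t+t^2)^c + d)^(β-1)) 0 = _ from hF.deriv]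
  norm_num
  rw [show c-1-1 = c-2 by ring, show β-1-1 = β-2 by ring]
  ring

lemma my_hqy (k c : ℝ) (s : ℝ) : HasDerivAt (fun s : ℝ => k + c^2*s^2) (c^2*(2*s)) s := by
  have h := ((hasDerivAt_pow 2 s).const_mul (c^2)).const_add k
  simp only [Nat.cast_ofNat, pow_one] at h
  exact h.congr_deriv (by ring)

lemma aux_y (c β k : ℝ) (hk : 0 < k) (y : ℝ) :
    deriv (fun y' => deriv (fun y'' : ℝ => (k + c^2*y''^2)^β) y') y
      = β*(β-1)*(k+c^2*y^2)^(β-2)*(2*c^2*y)^2 + β*(k+c^2*y^2)^(β-1)*(2*c^2) := by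
  have hpos : ∀ s : ℝ, 0 < k + c^2*s^2 := fun s =>
    add_pos_of_pos_of_nonneg hk (by positivity)
  have hd1 : ∀ s : ℝ, HasDerivAt (fun y'' : ℝ => (k + c^2*y''^2)^β)
      ((c^2*(2*s)) * β * (k+c^2*s^2)^(β-1)) s :=
    fun s => (my_hqy k c s).rpow_const (Or.inl (hpos s).ne')
  have heq : (fun y' => deriv (fun y'' : ℝ => (k + c^2*y''^2)^β) y')
      = fun s => (c^2*(2*s)) * β * (k+c^2*s^2)^(β-1) :=
    funext fun s => (hd1 s).deriv
  rw [heq]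
  have hlin : HasDerivAt (fun s : ℝ => c^2*(2*s) * β) (c^2*2*β) y := by
    have h := (((hasDerivAt_id y).const_mul 2).const_mul (c^2)).mul_const β
    simp only [id_eq, mul_one] at h
    exact h.congr_deriv (by ring)
  have h2 := (my_hqy k c y).rpow_const (p := β - 1) (Or.inl (hpos y).ne')
  have hF := hlin.mul h2
  rw [show deriv (fun s => c^2*(2*s) * β * (k+c^2*s^2)^(β-1)) y = _ from hF.deriv]
  rw [show β-1-1 = β-2 by ring]
  ring

lemma gam_eq (n : ℕ) (α : ℝ) (hα : 0 < α) (x' : EuclideanSpace ℝ (Fin n)) (y' : ℝ) :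
    Gam n α x' y' = ((‖x'‖^2 : ℝ) ^ (α+1) + (α+1)^2*y'^2) ^ (EE n α) := by
  have hc : (0:ℝ) < α + 1 := by linarith
  have h1 : ‖x'‖ ^ (2*(α+1)) = (‖x'‖^2 : ℝ) ^ (α+1) := by
    rw [show (2:ℝ)*(α+1) = ((2:ℕ):ℝ)*(α+1) by norm_num,
      Real.rpow_mul (norm_nonneg _), Real.rpow_natCast]
  have hU : (0:ℝ) ≤ (‖x'‖^2 : ℝ) ^ (α+1) + (α+1)^2*y'^2 := by positivity
  rw [Gam, rho, h1, ← Real.rpow_mul hU, EE]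
  congr 1
  field_simp

lemma norm_line (n : ℕ) (x : EuclideanSpace ℝ (Fin n)) (i : Fin n) (t : ℝ) :
    ‖x + t • EuclideanSpace.single i (1:ℝ)‖^2 = ‖x‖^2 + 2 * x i * t + t^2 := by
  rw [norm_add_sq_real]
  have h1 : (inner ℝ x (t • EuclideanSpace.single i (1:ℝ)) : ℝ) = t * x i := by
    rw [real_inner_smul_right, EuclideanSpace.inner_single_right]
    simp
  have h2 : ‖t • EuclideanSpace.single i (1:ℝ)‖^2 = t^2 := by
    rw [norm_smul, EuclideanSpace.norm_single]
    simp [Real.norm_eq_abs, sq_abs]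
  rw [h1, h2]; ring

lemma sum_sq (n : ℕ) (x : EuclideanSpace ℝ (Fin n)) :
    ∑ i : Fin n, (x i)^2 = ‖x‖^2 := by
  rw [EuclideanSpace.norm_eq, Real.sq_sqrt (by positivity)]
  simp [sq_abs]

theorem stmt_3 (n : ℕ) (α : ℝ) (hα : 0 < α) (hn : 1 < (n : ℝ) + α)
    (x : EuclideanSpace ℝ (Fin n)) (y : ℝ) (hx : x ≠ 0) :
    lapx n (fun x' => Gam n α x' y) x
        + ‖x‖ ^ (2 * α) * deriv (fun y' => deriv (fun y'' => Gam n α x y'') y') y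
      = 0 := by
  have hc : (0:ℝ) < α + 1 := by linarith
  have hxn : ‖x‖ ≠ 0 := norm_ne_zero_iff.mpr hx
  have ha : (0:ℝ) < (‖x‖^2 : ℝ) := by positivity
  have hd : (0:ℝ) ≤ (α+1)^2*y^2 := by positivity
  have hu : (0:ℝ) < (‖x‖^2:ℝ)^(α+1) + (α+1)^2*y^2 :=
    add_pos_of_pos_of_nonneg (Real.rpow_pos_of_pos ha _) hd
  have hline : ∀ i : Fin n, (fun t : ℝ => Gam n α (x + t • EuclideanSpace.single i 1) y)
      = fun t : ℝ => (((‖x‖^2:ℝ) + 2 * x i * t + t^2) ^ (α+1) + (α+1)^2*y^2) ^ (EE n α) := by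
    intro i; funext t
    rw [gam_eq n α hα, norm_line]
  -- x part
  have hx1 : lapx n (fun x' => Gam n α x' y) x
      = ∑ i : Fin n,
        ((EE n α*(EE n α-1)*((‖x‖^2:ℝ)^(α+1)+(α+1)^2*y^2)^(EE n α-2)*4*(α+1)^2*((‖x‖^2:ℝ)^α)^2
            + EE n α*((‖x‖^2:ℝ)^(α+1)+(α+1)^2*y^2)^(EE n α-1)*(α+1)*α*(‖x‖^2:ℝ)^(α-1)*4) * (x i)^2
          + EE n α*((‖x‖^2:ℝ)^(α+1)+(α+1)^2*y^2)^(EE n α-1)*2*(α+1)*(‖x‖^2:ℝ)^α) := by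
    unfold lapx
    refine Finset.sum_congr rfl fun i _ => ?_
    show iteratedDeriv 2 (fun t : ℝ => Gam n α (x + t • EuclideanSpace.single i 1) y) 0 = _
    rw [hline i, aux_x (α+1) (EE n α) ((α+1)^2*y^2) (‖x‖^2) (2 * x i) ha hd]
    rw [show α+1-1 = α by ring, show α+1-2 = α-1 by ring]
    ring
  rw [hx1, Finset.sum_add_distrib, ← Finset.mul_sum, sum_sq, Finset.sum_const,
    Finset.card_univ, Fintype.card_fin, nsmul_eq_mul]
  -- y part
  have hy1 : (fun y'' : ℝ => Gam n α x y'') =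
      fun y'' : ℝ => ((‖x‖^2:ℝ)^(α+1) + (α+1)^2*y''^2)^(EE n α) :=
    funext fun y'' => gam_eq n α hα x y''
  rw [hy1, aux_y (α+1) (EE n α) ((‖x‖^2:ℝ)^(α+1)) (Real.rpow_pos_of_pos ha _) y]
  have hnorm2α : ‖x‖ ^ (2*α) = (‖x‖^2:ℝ)^α := by
    rw [show (2:ℝ)*α = ((2:ℕ):ℝ)*α by norm_num,
      Real.rpow_mul (norm_nonneg _), Real.rpow_natCast]
  rw [hnorm2α]
  -- algebra
  have e1 : ((‖x‖^2:ℝ)^(α+1)+(α+1)^2*y^2)^(EE n α-2)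
      = ((‖x‖^2:ℝ)^(α+1)+(α+1)^2*y^2)^(EE n α-1) / ((‖x‖^2:ℝ)^(α+1)+(α+1)^2*y^2) := by
    rw [eq_div_iff hu.ne', ← Real.rpow_add_one hu.ne']
    congr 1; ring
  have e2 : (‖x‖^2:ℝ)^(α-1) = (‖x‖^2:ℝ)^α / ‖x‖^2 := by
    rw [eq_div_iff ha.ne', ← Real.rpow_add_one ha.ne']
    congr 1; ring
  have e3 : (‖x‖^2:ℝ)^(α+1) = (‖x‖^2:ℝ)^α * ‖x‖^2 := by
    rw [← Real.rpow_add_one ha.ne']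
  rw [e1, e2, e3, EE]
  have hu' : (0:ℝ) < (‖x‖^2:ℝ)^α * ‖x‖^2 + (α+1)^2*y^2 := by positivity
  field_simp
  ring
end

section
/- Let u ∈ C¹ on the closed unit ball of ℝⁿ satisfy (α+1)|u(x)| ≤ η|⟨x, ∇u(x)⟩| for all |x| ≤ 1, where α > 0 and η > 0. Then |u(x)| ≤ M |x|^{(α+1)/η} for all |x| ≤ 1, where M = max_{|x|=1}|u(x)|. -/
open Set Filter Topology Real

/-- Core 1-D lemma, positive case. -/
lemma oneDimPos (c : ℝ) (hc : 0 < c) (g g' : ℝ → ℝ)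
    (hg : ContinuousOn g (Set.Icc 0 1))
    (hd : ∀ t ∈ Set.Ioo (0:ℝ) 1, HasDerivAt g (g' t) t)
    (hg' : ContinuousOn g' (Set.Ioo 0 1))
    (h0 : g 0 = 0)
    (hineq : ∀ t ∈ Set.Ioo (0:ℝ) 1, c * |g t| ≤ t * |g' t|)
    (t₀ : ℝ) (ht₀ : t₀ ∈ Set.Ioo (0:ℝ) 1) (hpos : 0 < g t₀) :
    g t₀ ≤ |g 1| * t₀ ^ c := by
  obtain ⟨ht₀0, ht₀1⟩ := ht₀
  -- nonvanishing derivative where g ≠ 0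
  have hne : ∀ t ∈ Set.Ioo (0:ℝ) 1, g t ≠ 0 → g' t ≠ 0 := by
    intro t ht hgt hg't
    have := hineq t ht
    rw [hg't, abs_zero, mul_zero] at this
    have : |g t| ≤ 0 := nonpos_of_mul_nonpos_right (by linarith [mul_nonneg hc.le (abs_nonneg (g t))]) hc
    exact hgt (abs_eq_zero.mp (le_antisymm this (abs_nonneg _)))
  have hd0 : g' t₀ ≠ 0 := hne t₀ ⟨ht₀0, ht₀1⟩ hpos.ne'
  rcases hd0.lt_or_gt with hneg | hposd
  · -- Case B: g' t₀ < 0 ⇒ contradiction via g 0 = 0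
    exfalso
    have keyB : ∀ t ∈ Set.Ioc (0:ℝ) t₀, g' t < 0 := by
      intro t ⟨ht0, htt₀⟩
      by_contra h
      push_neg at h
      set E : Set ℝ := {s ∈ Set.Icc t t₀ | 0 ≤ g' s} with hE
      have hEne : E.Nonempty := ⟨t, ⟨le_refl t, htt₀⟩, h⟩
      have hsub : Set.Icc t t₀ ⊆ Set.Ioo (0:ℝ) 1 := fun s hs => ⟨ht0.trans_le hs.1, lt_of_le_of_lt hs.2 ht₀1⟩
      have hEclosed : IsClosed E := by
        have h1 := (hg'.mono hsub).preimage_isClosed_of_isClosed isClosed_Icc (isClosed_Ici (a := (0:ℝ)))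
        have : E = Set.Icc t t₀ ∩ g' ⁻¹' Set.Ici 0 := by ext s; simp [hE, and_comm]
        rw [this]; exact h1
      have hEbdd : BddAbove E := ⟨t₀, fun s hs => hs.1.2⟩
      set t₁ := sSup E with ht₁
      have ht₁E : t₁ ∈ E := hEclosed.csSup_mem hEne hEbdd
      have ht₁t₀ : t₁ < t₀ := lt_of_le_of_ne ht₁E.1.2 (fun h' => by
        rw [h'] at ht₁E; exact absurd ht₁E.2 (not_le.mpr hneg))
      have ht₁0 : 0 < t₁ := ht0.trans_le ht₁E.1.1
      have hIoo : Set.Ioo t₁ t₀ ⊆ Set.Ioo (0:ℝ) 1 := fun s hs => ⟨ht₁0.trans hs.1, hs.2.trans ht₀1⟩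
      have hnegOn : ∀ s ∈ Set.Ioo t₁ t₀, g' s < 0 := by
        intro s hs
        by_contra h'
        push_neg at h'
        have : s ∈ E := ⟨⟨ht₁E.1.1.trans hs.1.le, hs.2.le⟩, h'⟩
        exact absurd (le_csSup hEbdd this) (not_le.mpr hs.1)
      -- g antitone on [t₁, t₀]
      have hanti : StrictAntiOn g (Set.Icc t₁ t₀) := by
        apply strictAntiOn_of_deriv_neg (convex_Icc _ _)
        · exact hg.mono (fun s hs => ⟨(ht₁0.trans_le hs.1).le, (hs.2.trans_lt ht₀1).le⟩)
        · intro s hs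
          rw [interior_Icc] at hs
          rw [(hd s (hIoo hs)).deriv]
          exact hnegOn s hs
      have hgt₁ : 0 < g t₁ := by
        have := hanti ⟨le_refl t₁, ht₁t₀.le⟩ ⟨ht₁t₀.le, le_refl t₀⟩ ht₁t₀
        linarith
      have hd't₁ : g' t₁ ≠ 0 := hne t₁ ⟨ht₁0, ht₁t₀.trans ht₀1⟩ hgt₁.ne'
      have hd't₁pos : 0 < g' t₁ := lt_of_le_of_ne ht₁E.2 (Ne.symm hd't₁)
      -- limit from right: g' t₁ ≤ 0
      have : (𝓝[Set.Ioo t₁ t₀] t₁).NeBot := left_nhdsWithin_Ioo_neBot ht₁t₀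
      have htend : Tendsto g' (𝓝[Set.Ioo t₁ t₀] t₁) (𝓝 (g' t₁)) :=
        ((hg'.continuousWithinAt ⟨ht₁0, ht₁t₀.trans ht₀1⟩).mono hIoo)
      have : g' t₁ ≤ 0 := le_of_tendsto htend
        (eventually_nhdsWithin_of_forall (fun s hs => (hnegOn s hs).le))
      linarith
    -- g ≥ g t₀ on (0, t₀], contradict g 0 = 0
    have hge : ∀ s ∈ Set.Ioo (0:ℝ) t₀, g t₀ ≤ g s := by
      intro s hs
      have hanti : AntitoneOn g (Set.Icc s t₀) := by
        apply antitoneOn_of_deriv_nonpos (convex_Icc _ _)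
        · exact hg.mono (fun r hr => ⟨(hs.1.trans_le hr.1).le, (hr.2.trans_lt ht₀1).le⟩)
        · intro r hr
          rw [interior_Icc] at hr
          have hr' : r ∈ Set.Ioo (0:ℝ) 1 := ⟨hs.1.trans hr.1, hr.2.trans ht₀1⟩
          exact DifferentiableAt.differentiableWithinAt (hd r hr').differentiableAt
        · intro r hr
          rw [interior_Icc] at hr
          have hr' : r ∈ Set.Ioo (0:ℝ) 1 := ⟨hs.1.trans hr.1, hr.2.trans ht₀1⟩
          rw [(hd r hr').deriv]
          exact (keyB r ⟨hs.1.trans hr.1, hr.2.le⟩).le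
      exact hanti ⟨le_refl s, hs.2.le⟩ ⟨hs.2.le, le_refl t₀⟩ hs.2.le
    have : (𝓝[Set.Ioo (0:ℝ) t₀] 0).NeBot := left_nhdsWithin_Ioo_neBot ht₀0
    have htend : Tendsto g (𝓝[Set.Ioo (0:ℝ) t₀] 0) (𝓝 (g 0)) :=
      (hg.continuousWithinAt ⟨le_refl 0, zero_le_one⟩).mono
        (fun s hs => ⟨hs.1.le, (hs.2.trans ht₀1).le⟩)
    have : g t₀ ≤ g 0 := ge_of_tendsto htend
      (eventually_nhdsWithin_of_forall hge)
    rw [h0] at this; linarith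
  · -- Case A: 0 < g' t₀
    have keyA : ∀ t ∈ Set.Ico t₀ 1, 0 < g' t := by
      intro t ⟨ht₀t, ht1⟩
      by_contra h
      push_neg at h
      set E : Set ℝ := {s ∈ Set.Icc t₀ t | g' s ≤ 0} with hE
      have hEne : E.Nonempty := ⟨t, ⟨ht₀t, le_refl t⟩, h⟩
      have hsub : Set.Icc t₀ t ⊆ Set.Ioo (0:ℝ) 1 := fun s hs => ⟨ht₀0.trans_le hs.1, lt_of_le_of_lt hs.2 ht1⟩
      have hEclosed : IsClosed E := by
        have h1 := (hg'.mono hsub).preimage_isClosed_of_isClosed isClosed_Icc (isClosed_Iic (a := (0:ℝ)))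
        have : E = Set.Icc t₀ t ∩ g' ⁻¹' Set.Iic 0 := by ext s; simp [hE, and_comm]
        rw [this]; exact h1
      have hEbdd : BddBelow E := ⟨t₀, fun s hs => hs.1.1⟩
      set t₁ := sInf E with ht₁
      have ht₁E : t₁ ∈ E := hEclosed.csInf_mem hEne hEbdd
      have ht₀t₁ : t₀ < t₁ := lt_of_le_of_ne ht₁E.1.1 (fun h' => by
        rw [← h'] at ht₁E; exact absurd ht₁E.2 (not_le.mpr hposd))
      have ht₁1 : t₁ < 1 := lt_of_le_of_lt ht₁E.1.2 ht1
      have hIoo : Set.Ioo t₀ t₁ ⊆ Set.Ioo (0:ℝ) 1 := fun s hs => ⟨ht₀0.trans hs.1, hs.2.trans ht₁1⟩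
      have hposOn : ∀ s ∈ Set.Ioo t₀ t₁, 0 < g' s := by
        intro s hs
        by_contra h'
        push_neg at h'
        have : s ∈ E := ⟨⟨hs.1.le, hs.2.le.trans ht₁E.1.2⟩, h'⟩
        exact absurd (csInf_le hEbdd this) (not_le.mpr hs.2)
      have hmono : StrictMonoOn g (Set.Icc t₀ t₁) := by
        apply strictMonoOn_of_deriv_pos (convex_Icc _ _)
        · exact hg.mono (fun s hs => ⟨(ht₀0.trans_le hs.1).le, (hs.2.trans_lt ht₁1).le⟩)
        · intro s hs
          rw [interior_Icc] at hs
          rw [(hd s (hIoo hs)).deriv]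
          exact hposOn s hs
      have hgt₁ : 0 < g t₁ := by
        have := hmono ⟨le_refl t₀, ht₀t₁.le⟩ ⟨ht₀t₁.le, le_refl t₁⟩ ht₀t₁
        linarith
      have hd't₁ : g' t₁ ≠ 0 := hne t₁ ⟨ht₀0.trans ht₀t₁, ht₁1⟩ hgt₁.ne'
      have hd't₁neg : g' t₁ < 0 := lt_of_le_of_ne ht₁E.2 hd't₁
      have : (𝓝[Set.Ioo t₀ t₁] t₁).NeBot := right_nhdsWithin_Ioo_neBot ht₀t₁
      have htend : Tendsto g' (𝓝[Set.Ioo t₀ t₁] t₁) (𝓝 (g' t₁)) :=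
        ((hg'.continuousWithinAt ⟨ht₀0.trans ht₀t₁, ht₁1⟩).mono hIoo)
      have : 0 ≤ g' t₁ := ge_of_tendsto htend
        (eventually_nhdsWithin_of_forall (fun s hs => (hposOn s hs).le))
      linarith
    -- g positive on [t₀, 1)
    have hgpos : ∀ t ∈ Set.Ico t₀ 1, 0 < g t := by
      intro t ⟨ht₀t, ht1⟩
      rcases eq_or_lt_of_le ht₀t with h|h
      · rwa [← h]
      · have hmono : MonotoneOn g (Set.Icc t₀ t) := by
          apply monotoneOn_of_deriv_nonneg (convex_Icc _ _)
          · exact hg.mono (fun s hs => ⟨(ht₀0.trans_le hs.1).le, (hs.2.trans_lt ht1).le⟩)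
          · intro s hs
            rw [interior_Icc] at hs
            have hs' : s ∈ Set.Ioo (0:ℝ) 1 := ⟨ht₀0.trans hs.1, hs.2.trans ht1⟩
            exact (hd s hs').differentiableAt.differentiableWithinAt
          · intro s hs
            rw [interior_Icc] at hs
            have hs' : s ∈ Set.Ioo (0:ℝ) 1 := ⟨ht₀0.trans hs.1, hs.2.trans ht1⟩
            rw [(hd s hs').deriv]
            exact (keyA s ⟨hs.1.le, hs.2.trans ht1⟩).le
        have := hmono ⟨le_refl t₀, h.le⟩ ⟨h.le, le_refl t⟩ h.le
        linarith
    -- comparison with t ^ c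
    have hcomp : ∀ r ∈ Set.Ico t₀ 1, g t₀ * t₀ ^ (-c) ≤ g r * r ^ (-c) := by
      intro r ⟨ht₀r, hr1⟩
      rcases eq_or_lt_of_le ht₀r with h|h
      · rw [← h]
      set φ : ℝ → ℝ := fun t => g t * t ^ (-c) with hφ
      have hφd : ∀ s ∈ Set.Ioo t₀ r,
          HasDerivAt φ (g' s * s ^ (-c) + g s * (-c * s ^ (-c - 1))) s := by
        intro s hs
        have hs0 : (0:ℝ) < s := ht₀0.trans hs.1
        have hs' : s ∈ Set.Ioo (0:ℝ) 1 := ⟨hs0, hs.2.trans hr1⟩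
        exact (hd s hs').mul (Real.hasDerivAt_rpow_const (Or.inl hs0.ne'))
      have hmono : MonotoneOn φ (Set.Icc t₀ r) := by
        apply monotoneOn_of_deriv_nonneg (convex_Icc _ _)
        · apply ContinuousOn.mul
          · exact hg.mono (fun s hs => ⟨(ht₀0.trans_le hs.1).le, (hs.2.trans_lt hr1).le⟩)
          · exact fun s hs => (Real.continuousAt_rpow_const s (-c)
              (Or.inl (ht₀0.trans_le hs.1).ne')).continuousWithinAt
        · intro s hs
          rw [interior_Icc] at hs
          exact (hφd s hs).differentiableAt.differentiableWithinAt
        · intro s hs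
          rw [interior_Icc] at hs
          rw [(hφd s hs).deriv]
          have hs0 : (0:ℝ) < s := ht₀0.trans hs.1
          have hs' : s ∈ Set.Ioo (0:ℝ) 1 := ⟨hs0, hs.2.trans hr1⟩
          have hsIco : s ∈ Set.Ico t₀ 1 := ⟨hs.1.le, hs.2.trans hr1⟩
          have hgp : 0 < g s := hgpos s hsIco
          have hg'p : 0 < g' s := keyA s hsIco
          have h2 : c * g s ≤ s * g' s := by
            have := hineq s hs'
            rwa [abs_of_pos hgp, abs_of_pos hg'p] at this
          have h3 : (0:ℝ) < s ^ (-c - 1) := Real.rpow_pos_of_pos hs0 _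
          have hs1 : s ^ (-c) = s ^ (-c - 1) * s := by
            rw [← Real.rpow_add_one hs0.ne']; ring_nf
          rw [hs1]
          nlinarith [mul_le_mul_of_nonneg_right h2 h3.le]
      exact hmono ⟨le_refl t₀, h.le⟩ ⟨h.le, le_refl r⟩ h.le
    -- take the limit r → 1⁻
    have hnb : (𝓝[Set.Ioo t₀ (1:ℝ)] 1).NeBot := right_nhdsWithin_Ioo_neBot ht₀1
    have htendg : Tendsto g (𝓝[Set.Ioo t₀ (1:ℝ)] 1) (𝓝 (g 1)) :=
      (hg.continuousWithinAt ⟨zero_le_one, le_refl 1⟩).mono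
        (fun s hs => ⟨(ht₀0.trans hs.1).le, hs.2.le⟩)
    have htendr : Tendsto (fun r : ℝ => r ^ (-c)) (𝓝[Set.Ioo t₀ (1:ℝ)] 1) (𝓝 ((1:ℝ) ^ (-c))) :=
      ((Real.continuousAt_rpow_const 1 (-c) (Or.inl one_ne_zero)).continuousWithinAt).mono
        (fun s _ => trivial) |>.tendsto
    have hlim : g t₀ * t₀ ^ (-c) ≤ g 1 * (1:ℝ) ^ (-c) :=
      ge_of_tendsto (htendg.mul htendr)
        (eventually_nhdsWithin_of_forall (fun r hr => hcomp r ⟨hr.1.le, hr.2⟩))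
    rw [Real.one_rpow, mul_one] at hlim
    have hcc : t₀ ^ (-c) * t₀ ^ c = 1 := by
      rw [← Real.rpow_add ht₀0]; simp
    have htc : (0:ℝ) < t₀ ^ c := Real.rpow_pos_of_pos ht₀0 _
    calc g t₀ = g t₀ * (t₀ ^ (-c) * t₀ ^ c) := by rw [hcc, mul_one]
      _ = (g t₀ * t₀ ^ (-c)) * t₀ ^ c := by ring
      _ ≤ g 1 * t₀ ^ c := mul_le_mul_of_nonneg_right hlim htc.le
      _ ≤ |g 1| * t₀ ^ c := mul_le_mul_of_nonneg_right (le_abs_self _) htc.le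

lemma oneDimAbs (c : ℝ) (hc : 0 < c) (g g' : ℝ → ℝ)
    (hg : ContinuousOn g (Set.Icc 0 1))
    (hd : ∀ t ∈ Set.Ioo (0:ℝ) 1, HasDerivAt g (g' t) t)
    (hg' : ContinuousOn g' (Set.Ioo 0 1))
    (h0 : g 0 = 0)
    (hineq : ∀ t ∈ Set.Ioo (0:ℝ) 1, c * |g t| ≤ t * |g' t|)
    (t₀ : ℝ) (ht₀ : t₀ ∈ Set.Ioo (0:ℝ) 1) :
    |g t₀| ≤ |g 1| * t₀ ^ c := by
  rcases lt_trichotomy (g t₀) 0 with h|h|h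
  · rw [abs_of_neg h]
    have := oneDimPos c hc (fun t => -(g t)) (fun t => -(g' t)) hg.neg
      (fun t ht => (hd t ht).neg) hg'.neg (by simp [h0])
      (by intro t ht; simpa [abs_neg] using hineq t ht) t₀ ht₀ (by simpa using h)
    simpa [abs_neg] using this
  · rw [h, abs_zero]
    exact mul_nonneg (abs_nonneg _) (Real.rpow_nonneg ht₀.1.le c)
  · rw [abs_of_pos h]
    exact oneDimPos c hc g g' hg hd hg' h0 hineq t₀ ht₀ h

theorem stmt_8 (n : ℕ) (α η : ℝ) (hα : 0 < α) (hη : 0 < η)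
    (u : EuclideanSpace ℝ (Fin n) → ℝ)
    (hu : ContDiffOn ℝ 1 u (Metric.closedBall 0 1))
    (hyp : ∀ x : EuclideanSpace ℝ (Fin n), ‖x‖ ≤ 1 →
      (α + 1) * |u x| ≤ η * |(inner ℝ x (gradient u x) : ℝ)|)
    (M : ℝ)
    (hM : IsGreatest {a : ℝ | ∃ z : EuclideanSpace ℝ (Fin n), ‖z‖ = 1 ∧ a = |u z|} M) :
    ∀ x : EuclideanSpace ℝ (Fin n), ‖x‖ ≤ 1 → |u x| ≤ M * ‖x‖ ^ ((α + 1) / η) := by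
  intro x hx
  set c := (α + 1) / η with hcdef
  have hc : 0 < c := div_pos (by linarith) hη
  obtain ⟨z₀, hz₀, hMz₀⟩ := hM.1
  have hM0 : 0 ≤ M := hMz₀ ▸ abs_nonneg _
  have hu0 : u 0 = 0 := by
    have h := hyp 0 (by simp)
    rw [inner_zero_left, abs_zero, mul_zero] at h
    have := abs_nonneg (u 0)
    have h1 : |u 0| ≤ 0 := by nlinarith
    exact abs_eq_zero.mp (le_antisymm h1 this)
  rcases eq_or_lt_of_le (norm_nonneg x) with h0x | h0x
  · have hx0 : x = 0 := norm_eq_zero.mp h0x.symm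
    rw [hx0, hu0, norm_zero, Real.zero_rpow hc.ne', abs_zero, mul_zero]
  rcases eq_or_lt_of_le hx with h1x | h1x
  · rw [h1x, Real.one_rpow, mul_one]
    exact hM.2 ⟨x, h1x, rfl⟩
  -- main case : 0 < ‖x‖ < 1
  set z : EuclideanSpace ℝ (Fin n) := ‖x‖⁻¹ • x with hzdef
  have hznorm : ‖z‖ = 1 := by
    rw [hzdef, norm_smul, norm_inv, norm_norm, inv_mul_cancel₀ h0x.ne']
  have hsm : ∀ t : ℝ, ‖t • z‖ = |t| := by
    intro t; rw [norm_smul, hznorm, mul_one, Real.norm_eq_abs]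
  have hdiffAt : ∀ y : EuclideanSpace ℝ (Fin n), ‖y‖ < 1 → DifferentiableAt ℝ u y := by
    intro y hy
    have hmem : Metric.closedBall (0 : EuclideanSpace ℝ (Fin n)) 1 ∈ 𝓝 y :=
      mem_nhds_iff.mpr ⟨Metric.ball 0 1, Metric.ball_subset_closedBall, Metric.isOpen_ball,
        by simpa [Metric.mem_ball, dist_zero_right] using hy⟩
    exact ((hu.contDiffAt hmem).differentiableAt one_ne_zero)
  set g : ℝ → ℝ := fun t => u (t • z) with hgdef
  set g' : ℝ → ℝ := fun t => (fderiv ℝ u (t • z)) z with hg'def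
  have hmem' : ∀ t : ℝ, t ∈ Set.Ioo (0:ℝ) 1 → ‖t • z‖ < 1 := by
    intro t ht; rw [hsm, abs_of_pos ht.1]; exact ht.2
  have hd : ∀ t ∈ Set.Ioo (0:ℝ) 1, HasDerivAt g (g' t) t := by
    intro t ht
    have h1 : HasDerivAt (fun s : ℝ => s • z) ((1:ℝ) • z) t := (hasDerivAt_id t).smul_const z
    rw [one_smul] at h1
    have h2 := (hdiffAt (t • z) (hmem' t ht)).hasFDerivAt
    exact h2.comp_hasDerivAt t h1
  have hg : ContinuousOn g (Set.Icc 0 1) := by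
    apply hu.continuousOn.comp (Continuous.continuousOn (by continuity))
    intro t ht
    rw [Metric.mem_closedBall, dist_zero_right, hsm, abs_of_nonneg ht.1]
    exact ht.2
  have hg' : ContinuousOn g' (Set.Ioo 0 1) := by
    have hfc : ContinuousOn (fderiv ℝ u) (Metric.ball (0 : EuclideanSpace ℝ (Fin n)) 1) :=
      (hu.mono Metric.ball_subset_closedBall).continuousOn_fderiv_of_isOpen
        Metric.isOpen_ball le_rfl
    have hcomp : ContinuousOn (fun t : ℝ => fderiv ℝ u (t • z)) (Set.Ioo 0 1) := by
      apply hfc.comp (Continuous.continuousOn (by continuity))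
      intro t ht
      rw [Metric.mem_ball, dist_zero_right]
      exact hmem' t ht
    exact hcomp.clm_apply continuousOn_const
  have h0 : g 0 = 0 := by rw [hgdef]; simp [hu0]
  have hgradrel : ∀ t : ℝ, t ∈ Set.Ioo (0:ℝ) 1 →
      (inner ℝ z (gradient u (t • z)) : ℝ) = g' t := by
    intro t ht
    have hdy := hdiffAt (t • z) (hmem' t ht)
    have hgr := hdy.hasGradientAt
    have hfd := hgr.hasFDerivAt
    show (inner ℝ z (gradient u (t • z)) : ℝ) = (fderiv ℝ u (t • z)) z
    rw [hfd.fderiv, InnerProductSpace.toDual_apply_apply]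
    exact real_inner_comm _ _
  have hineq : ∀ t ∈ Set.Ioo (0:ℝ) 1, c * |g t| ≤ t * |g' t| := by
    intro t ht
    have hnorm : ‖t • z‖ ≤ 1 := (hmem' t ht).le
    have key := hyp (t • z) hnorm
    have hins : (inner ℝ (t • z) (gradient u (t • z)) : ℝ) = t * g' t := by
      rw [real_inner_smul_left, hgradrel t ht]
    rw [hins, abs_mul, abs_of_pos ht.1] at key
    rw [hcdef, div_mul_eq_mul_div, div_le_iff₀ hη]
    calc (α + 1) * |g t| ≤ η * (t * |g' t|) := key
      _ = t * |g' t| * η := by ring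
  have ht₀ : ‖x‖ ∈ Set.Ioo (0:ℝ) 1 := ⟨h0x, h1x⟩
  have habs := oneDimAbs c hc g g' hg hd hg' h0 hineq ‖x‖ ht₀
  have hgx : g ‖x‖ = u x := by
    rw [hgdef]
    simp only [hzdef, smul_smul, mul_inv_cancel₀ h0x.ne', one_smul]
  have hg1 : |g 1| ≤ M := by
    apply hM.2
    exact ⟨z, hznorm, by rw [hgdef]; simp⟩
  rw [hgx] at habs
  calc |u x| ≤ |g 1| * ‖x‖ ^ c := habs
    _ ≤ M * ‖x‖ ^ c := mul_le_mul_of_nonneg_right hg1 (Real.rpow_nonneg (norm_nonneg x) c)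
end
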